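/- Type D determinant vanishing (equidistribution input): let m = 2n+ε with ε ∈ {0,1}, let λ+δ have distinct positive entries, and let z = (y_1,...,y_n, y_1^{−1},...,y_n^{−1}) if ε = 0, with an extra last coordinate 1 if ε = 1. For nonempty T ⊆ [m]_{1−ε}, let M(T) be the m×m matrix with entries M_{i,j} = z_i^{λ_j+δ_j} if j ∉ T ∪ [m]_ε, and M_{i,j} = z_i^{λ_j+δ_j} + z_i^{−(λ_j+δ_j)} if j ∈ T ∪ [m]_ε. Then det M(T) = 0. -/

import Mathlib

open Finset

private lemma sum_split19 {F : Type*} [AddCommMonoid F] (n ε : ℕ) (g : Fin (2*n+ε) → F) :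
    ∑ i, g i = (∑ i : Fin n, (g ⟨i, by omega⟩ + g ⟨n + i, by omega⟩)) +
      ∑ k : Fin ε, g ⟨2*n + k, by omega⟩ := by
  rw [← Equiv.sum_comp ((Equiv.sumCongr (Equiv.refl (Fin n)) finSumFinEquiv).trans
      (finSumFinEquiv.trans (finCongr (by omega : n + (n + ε) = 2*n+ε)))) g,
    Fintype.sum_sum_type, Fintype.sum_sum_type, Finset.sum_add_distrib, add_assoc]
  refine congrArg₂ (· + ·) ?_ (congrArg₂ (· + ·) ?_ ?_)
  · exact Finset.sum_congr rfl fun i _ => congr_arg g (Fin.ext (by simp))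
  · exact Finset.sum_congr rfl fun i _ => congr_arg g (Fin.ext (by simp))
  · exact Finset.sum_congr rfl fun k _ => congr_arg g (Fin.ext (by simp; omega))

private lemma aux19 {F : Type*} [Field F] (n ε : ℕ)
    (M : Matrix (Fin (2*n+ε)) (Fin (2*n+ε)) F)
    (P : Fin (2*n+ε) → Prop) [DecidablePred P]
    (c : Fin n → F) (hc : c ≠ 0)
    (hsym : ∀ (i : Fin n) (j), P j → M ⟨i, by omega⟩ j = M ⟨n + i, by omega⟩ j)
    (hker : ∀ j, ¬ P j →
      ∑ i : Fin n, c i * (M ⟨i, by omega⟩ j - M ⟨n + i, by omega⟩ j) = 0) :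
    M.det = 0 := by
  classical
  rw [← Matrix.exists_vecMul_eq_zero_iff]
  set v : Fin (2*n+ε) → F := fun i =>
    if h : (i : ℕ) < n then c ⟨(i : ℕ), h⟩
    else if h2 : (i : ℕ) < 2 * n then -c ⟨(i : ℕ) - n, by omega⟩ else 0 with hv
  have hva : ∀ i : Fin n, v ⟨(i : ℕ), by omega⟩ = c i := by
    intro i
    simp [hv, i.isLt]
  have hvb : ∀ i : Fin n, v ⟨n + (i : ℕ), by omega⟩ = -c i := by
    intro i
    have h1 : ¬ (n + (i : ℕ) < n) := by omega
    have h2 : n + (i : ℕ) < 2 * n := by have := i.isLt; omega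
    have h4 : (⟨n + (i : ℕ) - n, by omega⟩ : Fin n) = i := Fin.ext (by simp)
    simp only [hv]
    rw [dif_neg h1, dif_pos h2, h4]
  have hvc : ∀ k : Fin ε, v ⟨2*n + (k : ℕ), by omega⟩ = 0 := by
    intro k
    have h1 : ¬ (2*n + (k : ℕ) < n) := by omega
    have h2 : ¬ (2*n + (k : ℕ) < 2 * n) := by omega
    simp only [hv]
    rw [dif_neg h1, dif_neg h2]
  refine ⟨v, ?_, ?_⟩
  · obtain ⟨i0, hi0⟩ := Function.ne_iff.mp hc
    intro hveq
    apply hi0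
    have := congrFun hveq ⟨(i0 : ℕ), by omega⟩
    rw [hva ⟨(i0 : ℕ), i0.isLt⟩] at this
    simpa using this
  · funext j
    simp only [Matrix.vecMul, dotProduct, Pi.zero_apply]
    rw [sum_split19 n ε (fun i => v i * M i j)]
    have e3 : ∑ k : Fin ε, v ⟨2*n + (k : ℕ), by omega⟩ * M ⟨2*n + (k : ℕ), by omega⟩ j = 0 :=
      Finset.sum_eq_zero fun k _ => by rw [hvc k, zero_mul]
    rw [e3, add_zero]
    have e12 : ∀ i : Fin n,
        v ⟨(i : ℕ), by omega⟩ * M ⟨(i : ℕ), by omega⟩ j +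
          v ⟨n + (i : ℕ), by omega⟩ * M ⟨n + (i : ℕ), by omega⟩ j =
        c i * (M ⟨(i : ℕ), by omega⟩ j - M ⟨n + (i : ℕ), by omega⟩ j) := by
      intro i
      rw [hva, hvb]
      ring
    rw [Finset.sum_congr rfl fun i _ => e12 i]
    by_cases hP : P j
    · exact Finset.sum_eq_zero fun i _ => by rw [hsym i j hP, sub_self, mul_zero]
    · exact hker j hP

theorem stmt19 {F : Type*} [Field F] (n ε : ℕ) (hε : ε ≤ 1) (y : Fin n → Fˣ)
    (a : Fin (2 * n + ε) → ℤ) (ha : Function.Injective a) (hapos : ∀ j, 0 < a j)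
    (T : Finset (Fin (2 * n + ε))) (hTne : T.Nonempty)
    (hT : ∀ j ∈ T, (j : ℕ) % 2 = ε) :
    Matrix.det (Matrix.of fun i j : Fin (2 * n + ε) =>
      (fun zi : Fˣ =>
        if j ∈ T ∨ (j : ℕ) % 2 = 1 - ε then
          ((zi ^ a j : Fˣ) : F) + ((zi ^ (-a j) : Fˣ) : F)
        else ((zi ^ a j : Fˣ) : F))
      (if h : (i : ℕ) < n then y ⟨(i : ℕ), h⟩
        else if h2 : (i : ℕ) < 2 * n then (y ⟨(i : ℕ) - n, by omega⟩)⁻¹ else 1)) = 0 := by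
  classical
  obtain ⟨t, htT⟩ := hTne
  have hn : 1 ≤ n := by
    have h1 := hT t htT
    have h2 := t.isLt
    by_contra h
    omega
  -- the set of "unpaired" columns
  set S : Finset (Fin (2 * n + ε)) :=
    (Finset.univ.filter fun j : Fin (2 * n + ε) => (j : ℕ) % 2 = ε) \ T with hS
  have hScard : S.card < n := by
    have hTsub : T ⊆ Finset.univ.filter fun j : Fin (2 * n + ε) => (j : ℕ) % 2 = ε := by
      intro j hj; simp [hT j hj]
    have h1 : (Finset.univ.filter fun j : Fin (2 * n + ε) => (j : ℕ) % 2 = ε).card ≤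
        (Finset.range n).card := by
      refine Finset.card_le_card_of_injOn (fun j => (j : ℕ) / 2) ?_ ?_
      · intro j hj
        simp only [Finset.coe_filter, Finset.mem_coe, Finset.mem_filter, Set.mem_setOf_eq, Finset.mem_univ, true_and] at hj
        have := j.isLt
        simp only [Finset.coe_range, Set.mem_Iio, Finset.mem_coe, Finset.mem_range]
        omega
      · intro j1 h1 j2 h2 hj
        simp only [Finset.coe_filter, Set.mem_setOf_eq, Finset.mem_univ, true_and] at h1 h2
        simp only at hj
        apply Fin.ext
        omega
    rw [Finset.card_range] at h1
    have h2 : 1 ≤ T.card := Finset.card_pos.mpr ⟨t, htT⟩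
    rw [hS, Finset.card_sdiff_of_subset hTsub]
    omega
  -- the difference matrix
  set B : Fin n → Fin (2 * n + ε) → F := fun i j =>
    ((y i ^ a j : Fˣ) : F) - ((y i ^ (-a j) : Fˣ) : F) with hB
  -- a nonzero kernel element
  obtain ⟨c, hc0, hfc⟩ : ∃ c : Fin n → F, c ≠ 0 ∧ ∀ j ∈ S, ∑ i, c i * B i j = 0 := by
    set N : Matrix S (Fin n) F := Matrix.of fun j i => B i j.1 with hN
    have hni : ¬ Function.Injective N.mulVecLin := by
      intro hinj
      have := LinearMap.finrank_le_finrank_of_injective hinj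
      rw [Module.finrank_pi, Module.finrank_pi, Fintype.card_fin, Fintype.card_coe] at this
      omega
    rw [Function.not_injective_iff] at hni
    obtain ⟨c1, c2, hfeq, hne⟩ := hni
    refine ⟨c1 - c2, sub_ne_zero.mpr hne, fun j hj => ?_⟩
    have hz : N.mulVecLin (c1 - c2) = 0 := by rw [map_sub, hfeq, sub_self]
    have h3 := congrFun hz ⟨j, hj⟩
    simp only [Matrix.mulVecLin_apply, Matrix.mulVec, dotProduct, Pi.zero_apply] at h3
    rw [← h3]
    apply Finset.sum_congr rfl
    intro i _
    simp [hN, mul_comm]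
  apply aux19 n ε _ (fun j => j ∈ T ∨ (j : ℕ) % 2 = 1 - ε) c hc0
  · -- symmetry
    intro i j hP
    simp only [Matrix.of_apply, if_pos hP]
    have h1 : ((i : ℕ) : ℕ) < n := i.isLt
    have h2 : ¬ (n + (i : ℕ) < n) := by omega
    have h3 : n + (i : ℕ) < 2 * n := by omega
    rw [dif_pos h1, dif_neg h2, dif_pos h3]
    have hy : (y ⟨n + (i : ℕ) - n, by omega⟩) = y i := by
      congr 1; apply Fin.ext; simp
    rw [hy, Fin.eta]
    rw [inv_zpow, inv_zpow, ← zpow_neg, ← zpow_neg, neg_neg, add_comm]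
  · -- kernel
    intro j hP
    push_neg at hP
    obtain ⟨hjT, hjmod⟩ := hP
    have hjS : j ∈ S := by
      rw [hS]
      simp only [Finset.mem_sdiff, Finset.mem_filter, Finset.mem_univ, true_and]
      refine ⟨?_, hjT⟩
      have := Nat.mod_lt (j : ℕ) (show 0 < 2 by norm_num)
      omega
    rw [← hfc j hjS]
    apply Finset.sum_congr rfl
    intro i _
    congr 1
    have hP' : ¬ (j ∈ T ∨ (j : ℕ) % 2 = 1 - ε) := by tauto
    simp only [Matrix.of_apply, if_neg hP']
    have h1 : ((i : ℕ) : ℕ) < n := i.isLt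
    have h2 : ¬ (n + (i : ℕ) < n) := by omega
    have h3 : n + (i : ℕ) < 2 * n := by omega
    rw [dif_pos h1, dif_neg h2, dif_pos h3]
    have hy : (y ⟨n + (i : ℕ) - n, by omega⟩) = y i := by
      congr 1; apply Fin.ext; simp
    rw [hy, Fin.eta, hB]
    rw [inv_zpow, ← zpow_neg]
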